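/- Let q, p : ℝ → ℝ³ be smooth curves with p(t) · q(t) = 1 and p'(t) = q(t) × q'(t) for all t, and suppose I := det(q, q', q'') and Ī := det(p, p', p'') are nowhere zero. Setting J := det(q', q'', q''') and K := det(q, q'', q'''), the curve p satisfies the third-order linear ODE p''' − (I'/I) p'' + (K/I) p' + (J/I) p = 0. -/

import Mathlib

open Matrix

/-- Scalar triple product on ℝ³. -/
def det3 (u v w : Fin 3 → ℝ) : ℝ := u ⬝ᵥ (v ⨯₃ w)

section Aux

lemma hasDerivAt_cross3 {f g : ℝ → Fin 3 → ℝ} {f' g' : Fin 3 → ℝ} {t : ℝ}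
    (hf : HasDerivAt f f' t) (hg : HasDerivAt g g' t) :
    HasDerivAt (fun s => f s ⨯₃ g s) (f' ⨯₃ g t + f t ⨯₃ g') t := by
  rw [hasDerivAt_pi] at hf hg ⊢
  intro i
  fin_cases i
  · simp [cross_apply]
    convert (((hf 1).mul (hg 2)).sub ((hf 2).mul (hg 1))) using 1; rfl; ring
  · simp [cross_apply]
    convert (((hf 2).mul (hg 0)).sub ((hf 0).mul (hg 2))) using 1; rfl; ring
  · simp [cross_apply]
    convert (((hf 0).mul (hg 1)).sub ((hf 1).mul (hg 0))) using 1; rfl; ring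

lemma hasDerivAt_dot3 {f g : ℝ → Fin 3 → ℝ} {f' g' : Fin 3 → ℝ} {t : ℝ}
    (hf : HasDerivAt f f' t) (hg : HasDerivAt g g' t) :
    HasDerivAt (fun s => f s ⬝ᵥ g s) (f' ⬝ᵥ g t + f t ⬝ᵥ g') t := by
  rw [hasDerivAt_pi] at hf hg
  simp only [dotProduct, Fin.sum_univ_three]
  convert ((((hf 0).mul (hg 0)).add ((hf 1).mul (hg 1))).add
    (((hf 2).mul (hg 2)))) using 1
  rfl
  rfl
  rfl
  ring

lemma hasDerivAt_det3 {f g h : ℝ → Fin 3 → ℝ} {f' g' h' : Fin 3 → ℝ} {t : ℝ}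
    (hf : HasDerivAt f f' t) (hg : HasDerivAt g g' t) (hh : HasDerivAt h h' t) :
    HasDerivAt (fun s => det3 (f s) (g s) (h s))
      (det3 f' (g t) (h t) + det3 (f t) g' (h t) + det3 (f t) (g t) h') t := by
  have := hasDerivAt_dot3 hf (hasDerivAt_cross3 hg hh)
  simp only [det3] at *
  convert this using 1
  simp only [dotProduct, cross_apply, Fin.sum_univ_three, Pi.add_apply,
    Matrix.cons_val_zero, Matrix.cons_val_one, Matrix.head_cons, Matrix.cons_val_two,
    Matrix.tail_cons]
  ring

lemma cramer3 (v a b c : Fin 3 → ℝ) :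
    det3 a b c • v = (v ⬝ᵥ a) • (b ⨯₃ c) + (v ⬝ᵥ b) • (c ⨯₃ a) + (v ⬝ᵥ c) • (a ⨯₃ b) := by
  funext i
  fin_cases i <;>
  · simp [det3, cross_apply, dotProduct, Fin.sum_univ_three]
    ring

lemma cross_dot_fst (a b : Fin 3 → ℝ) : (a ⨯₃ b) ⬝ᵥ a = 0 := by
  simp only [cross_apply, dotProduct, Fin.sum_univ_three, Matrix.cons_val_zero,
    Matrix.cons_val_one, Matrix.head_cons, Matrix.cons_val_two, Matrix.tail_cons]
  ring

lemma cross_dot_snd (a b : Fin 3 → ℝ) : (a ⨯₃ b) ⬝ᵥ b = 0 := by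
  simp only [cross_apply, dotProduct, Fin.sum_univ_three, Matrix.cons_val_zero,
    Matrix.cons_val_one, Matrix.head_cons, Matrix.cons_val_two, Matrix.tail_cons]
  ring

lemma cross_dot_eq_det3 (a b c : Fin 3 → ℝ) : (a ⨯₃ b) ⬝ᵥ c = det3 a b c := by
  simp only [det3, cross_apply, dotProduct, Fin.sum_univ_three, Matrix.cons_val_zero,
    Matrix.cons_val_one, Matrix.head_cons, Matrix.cons_val_two, Matrix.tail_cons]
  ring

lemma det3_self12 (u v : Fin 3 → ℝ) : det3 u u v = 0 := by
  simp only [det3, cross_apply, dotProduct, Fin.sum_univ_three, Matrix.cons_val_zero,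
    Matrix.cons_val_one, Matrix.head_cons, Matrix.cons_val_two, Matrix.tail_cons]
  ring

lemma det3_self23 (u v : Fin 3 → ℝ) : det3 u v v = 0 := by
  simp only [det3, cross_apply, dotProduct, Fin.sum_univ_three, Matrix.cons_val_zero,
    Matrix.cons_val_one, Matrix.head_cons, Matrix.cons_val_two, Matrix.tail_cons]
  ring

lemma polyid3 (a b c d : Fin 3 → ℝ) :
    det3 a b c • (a ⨯₃ d) - det3 a b d • (a ⨯₃ c) + det3 a c d • (a ⨯₃ b) = 0 := by
  funext i
  fin_cases i <;>
  · simp [det3, cross_apply, dotProduct, Fin.sum_univ_three]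
    ring

lemma key3 (a b c d : Fin 3 → ℝ) (D : ℝ) (hD : D ≠ 0) (hdef : D = det3 a b c) :
    (b ⨯₃ c + a ⨯₃ d) - (det3 a b d / D) • (a ⨯₃ c)
      + (det3 a c d / D) • (a ⨯₃ b)
      + (-D ^ 2 / D) • (D⁻¹ • (b ⨯₃ c)) = 0 := by
  have h0 : -D ^ 2 / D = -D := by field_simp
  have h1 : (-D) • (D⁻¹ • (b ⨯₃ c)) = -(b ⨯₃ c) := by
    rw [smul_smul, show -D * D⁻¹ = -1 by field_simp, neg_one_smul]
  rw [h0, h1]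
  have h2 := polyid3 a b c d
  rw [← hdef] at h2
  funext i
  have h3 := congrFun h2 i
  simp only [Pi.add_apply, Pi.sub_apply, Pi.neg_apply, Pi.smul_apply, smul_eq_mul,
    Pi.zero_apply] at h3 ⊢
  field_simp
  linear_combination h3

end Aux

/-- Along an integral curve of the Cartan–Engel system `p ⬝ᵥ q = 1`, `p' = q × q'`,
the companion curve `p` satisfies the tautological ODE
`p''' − (I'/I) p'' + (K/I) p' + (J/I) p = 0`, where `I = det(q,q',q'')`,
`J = det(q',q'',q''')`, `K = det(q,q'',q''')`. -/
theorem dancing_mate_tautological_ODE (q p : ℝ → Fin 3 → ℝ)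
    (hq : ContDiff ℝ (⊤ : ℕ∞) q) (hp : ContDiff ℝ (⊤ : ℕ∞) p)
    (hpq : ∀ t, p t ⬝ᵥ q t = 1)
    (hode : ∀ t, deriv p t = q t ⨯₃ deriv q t)
    (I : ℝ → ℝ) (hIdef : ∀ t, I t = det3 (q t) (deriv q t) (deriv (deriv q) t))
    (hI : ∀ t, I t ≠ 0)
    (hIbar : ∀ t, det3 (p t) (deriv p t) (deriv (deriv p) t) ≠ 0) :
    ∀ t, deriv (deriv (deriv p)) t
        - (deriv I t / I t) • deriv (deriv p) t
        + (det3 (q t) (deriv (deriv q) t) (deriv (deriv (deriv q)) t) / I t)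
            • deriv p t
        + (det3 (deriv q t) (deriv (deriv q) t) (deriv (deriv (deriv q)) t) / I t)
            • p t = 0 := by
  have h1 := contDiff_infty_iff_deriv.mp hq
  have h2 := contDiff_infty_iff_deriv.mp h1.2
  have h3 := contDiff_infty_iff_deriv.mp h2.2
  have hp1 := contDiff_infty_iff_deriv.mp hp
  have Hq : ∀ s, HasDerivAt q (deriv q s) s := fun s => (h1.1 s).hasDerivAt
  have Hq1 : ∀ s, HasDerivAt (deriv q) (deriv (deriv q) s) s := fun s => (h2.1 s).hasDerivAt
  have Hq2 : ∀ s, HasDerivAt (deriv (deriv q)) (deriv (deriv (deriv q)) s) s :=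
    fun s => (h3.1 s).hasDerivAt
  have Hp : ∀ s, HasDerivAt p (q s ⨯₃ deriv q s) s := fun s => hode s ▸ (hp1.1 s).hasDerivAt
  -- second derivative of p
  have hdp : deriv p = fun s => q s ⨯₃ deriv q s := funext hode
  have hP2 : ∀ s, deriv (deriv p) s = q s ⨯₃ deriv (deriv q) s := by
    intro s
    rw [hdp, (hasDerivAt_cross3 (Hq s) (Hq1 s)).deriv, cross_self, zero_add]
  -- third derivative of p
  have hdp2 : deriv (deriv p) = fun s => q s ⨯₃ deriv (deriv q) s := funext hP2
  have hP3 : ∀ s, deriv (deriv (deriv p)) s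
      = deriv q s ⨯₃ deriv (deriv q) s + q s ⨯₃ deriv (deriv (deriv q)) s := by
    intro s
    rw [hdp2, (hasDerivAt_cross3 (Hq s) (Hq2 s)).deriv]
  -- p ⬝ q' = 0
  have hb : ∀ s, p s ⬝ᵥ deriv q s = 0 := by
    intro s
    have hconst : (fun u => p u ⬝ᵥ q u) = fun _ => (1:ℝ) := funext hpq
    have hd0 : HasDerivAt (fun u => p u ⬝ᵥ q u) 0 s := by
      rw [hconst]; exact hasDerivAt_const s 1
    have := (hasDerivAt_dot3 (Hp s) (Hq s)).unique hd0
    rw [cross_dot_fst] at this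
    linarith
  -- p ⬝ q'' = 0
  have hc : ∀ s, p s ⬝ᵥ deriv (deriv q) s = 0 := by
    intro s
    have hconst : (fun u => p u ⬝ᵥ deriv q u) = fun _ => (0:ℝ) := funext hb
    have hd0 : HasDerivAt (fun u => p u ⬝ᵥ deriv q u) 0 s := by
      rw [hconst]; exact hasDerivAt_const s 0
    have := (hasDerivAt_dot3 (Hp s) (Hq1 s)).unique hd0
    rw [cross_dot_snd] at this
    linarith
  -- p ⬝ q''' = -I
  have hd : ∀ s, p s ⬝ᵥ deriv (deriv (deriv q)) s = -(I s) := by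
    intro s
    have hconst : (fun u => p u ⬝ᵥ deriv (deriv q) u) = fun _ => (0:ℝ) := funext hc
    have hd0 : HasDerivAt (fun u => p u ⬝ᵥ deriv (deriv q) u) 0 s := by
      rw [hconst]; exact hasDerivAt_const s 0
    have := (hasDerivAt_dot3 (Hp s) (Hq2 s)).unique hd0
    rw [cross_dot_eq_det3, ← hIdef s] at this
    linarith
  -- I • p = q' × q''
  have hPval : ∀ s, I s • p s = deriv q s ⨯₃ deriv (deriv q) s := by
    intro s
    rw [hIdef s, cramer3, hpq s, hb s, hc s]
    simp
  -- derivative of I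
  have hI' : ∀ s, deriv I s = det3 (q s) (deriv q s) (deriv (deriv (deriv q)) s) := by
    intro s
    have hIfun : I = fun u => det3 (q u) (deriv q u) (deriv (deriv q) u) := funext hIdef
    rw [hIfun, (hasDerivAt_det3 (Hq s) (Hq1 s) (Hq2 s)).deriv, det3_self12, det3_self23]
    ring
  -- J = -I²
  have hJ : ∀ s, det3 (deriv q s) (deriv (deriv q) s) (deriv (deriv (deriv q)) s)
      = -(I s) ^ 2 := by
    intro s
    rw [← cross_dot_eq_det3, ← hPval s, smul_dotProduct, hd s, smul_eq_mul]
    ring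
  intro t
  have hp_eq : p t = (I t)⁻¹ • (deriv q t ⨯₃ deriv (deriv q) t) := by
    rw [← hPval t, smul_smul, inv_mul_cancel₀ (hI t), one_smul]
  rw [hP3 t, hP2 t, hode t, hI' t, hJ t, hp_eq]
  exact key3 (q t) (deriv q t) (deriv (deriv q) t) (deriv (deriv (deriv q)) t)
    (I t) (hI t) (hIdef t)
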